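/- For every natural number n ≥ 2, the sum over all triples (s,m,ℓ) of natural numbers with s + m + ℓ = n − 2 of the quantity s + 2m + 2ℓ equals binom(n,2)·(5/3)·(n−2); consequently, 1 + (1/binom(n,2))·∑_{(s,m,ℓ): s+m+ℓ=n−2} (s + 2m + 2ℓ) = (5/3)·n − 7/3. (This is the expected number of key comparisons used by the dual-pivot partitioning strategy 'smaller pivot first' to classify a list of n elements, two of which are the pivots.) -/

import Mathlib

open Finset

lemma sq_sum (n : ℕ) : 6 * ∑ i ∈ range (n+1), i*i = n*(n+1)*(2*n+1) := by
  induction n with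
  | zero => simp
  | succ n ih =>
    rw [Finset.sum_range_succ, Nat.mul_add, ih]
    ring

lemma lin_sum (n : ℕ) : 2 * ∑ i ∈ range (n+1), i = n*(n+1) := by
  induction n with
  | zero => simp
  | succ n ih =>
    rw [Finset.sum_range_succ, Nat.mul_add, ih]
    ring

lemma nat_main (k : ℕ) :
    6 * ∑ s ∈ range (k+1), (k+1-s)*(2*k-s) = 5*k*(k+1)*(k+2) := by
  have hrefl := Finset.sum_range_reflect (fun s => (k+1-s)*(2*k-s)) (k+1)
  have h1 : ∑ s ∈ range (k+1), (k+1-s)*(2*k-s)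
      = ∑ j ∈ range (k+1), (j+1)*(k+j) := by
    rw [← hrefl]
    apply Finset.sum_congr rfl
    intro j hj
    simp only [Finset.mem_range] at hj
    have : k + 1 - 1 - j = k - j := by omega
    rw [this]
    have h2 : k + 1 - (k - j) = j + 1 := by omega
    have h3 : 2*k - (k - j) = k + j := by omega
    rw [h2, h3]
  rw [h1]
  have hexp : ∀ j, (j+1)*(k+j) = j*j + (k+1)*j + k := by intro j; ring
  calc 6 * ∑ j ∈ range (k+1), (j+1)*(k+j)
      = 6 * ∑ j ∈ range (k+1), (j*j + (k+1)*j + k) := by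
        simp only [hexp]
    _ = 6 * ((∑ j ∈ range (k+1), j*j) + (k+1)*(∑ j ∈ range (k+1), j) + (k+1)*k) := by
        rw [Finset.sum_add_distrib, Finset.sum_add_distrib, ← Finset.mul_sum,
          Finset.sum_const, Finset.card_range, smul_eq_mul]
    _ = 6 * ∑ j ∈ range (k+1), j*j + 3*(k+1)*(2 * ∑ j ∈ range (k+1), j)
        + 6*(k+1)*k := by ring
    _ = k*(k+1)*(2*k+1) + 3*(k+1)*(k*(k+1)) + 6*(k+1)*k := by
        rw [sq_sum, lin_sum]
    _ = 5*k*(k+1)*(k+2) := by ring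

lemma filtered_sum (k : ℕ) :
    (∑ x ∈ (Finset.range (k+2) ×ˢ Finset.range (k+2) ×ˢ Finset.range (k+2)).filter
        (fun x : ℕ × ℕ × ℕ => x.1 + x.2.1 + x.2.2 = k),
        ((x.1 : ℝ) + 2 * (x.2.1 : ℝ) + 2 * (x.2.2 : ℝ)))
      = (5*k*(k+1)*(k+2) : ℕ) / 6 := by
  have hbij :
      (∑ x ∈ (Finset.range (k+2) ×ˢ Finset.range (k+2) ×ˢ Finset.range (k+2)).filter
        (fun x : ℕ × ℕ × ℕ => x.1 + x.2.1 + x.2.2 = k),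
        ((x.1 : ℝ) + 2 * (x.2.1 : ℝ) + 2 * (x.2.2 : ℝ)))
      = ∑ p ∈ (range (k+1)).sigma (fun s => range (k+1-s)),
          ((p.1 : ℝ) + 2 * (p.2 : ℝ) + 2 * ((k - p.1 - p.2 : ℕ) : ℝ)) := by
    apply Finset.sum_bij' (i := fun x _ => (⟨x.1, x.2.1⟩ : Σ _ : ℕ, ℕ))
      (j := fun p _ => (p.1, p.2, k - p.1 - p.2))
    · intro x hx
      simp only [Finset.mem_filter, Finset.mem_product, Finset.mem_range] at hx
      simp only [Finset.mem_sigma, Finset.mem_range]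
      omega
    · intro p hp
      simp only [Finset.mem_sigma, Finset.mem_range] at hp
      simp only [Finset.mem_filter, Finset.mem_product, Finset.mem_range]
      omega
    · intro x hx
      simp only [Finset.mem_filter, Finset.mem_product, Finset.mem_range] at hx
      obtain ⟨a, b, c⟩ := x
      simp only [Finset.mem_filter, Finset.mem_product, Finset.mem_range] at hx
      simp only [Prod.mk.injEq, true_and]
      omega
    · intro p hp; rfl
    · intro x hx
      simp only [Finset.mem_filter, Finset.mem_product, Finset.mem_range] at hx
      have : k - x.1 - x.2.1 = x.2.2 := by omega
      rw [this]
  rw [hbij, Finset.sum_sigma]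
  have hinner : ∀ s ∈ range (k+1),
      (∑ m ∈ range (k+1-s), ((s : ℝ) + 2 * (m : ℝ) + 2 * ((k - s - m : ℕ) : ℝ)))
      = ((k+1-s) * (2*k-s) : ℕ) := by
    intro s hs
    simp only [Finset.mem_range] at hs
    have : ∀ m ∈ range (k+1-s),
        ((s : ℝ) + 2 * (m : ℝ) + 2 * ((k - s - m : ℕ) : ℝ)) = ((2*k-s : ℕ) : ℝ) := by
      intro m hm
      simp only [Finset.mem_range] at hm
      have h1 : k - s - m + (s + m) = k := by omega
      have h2 : (2*k-s) + s = 2*k := by omega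
      have e1 : ((k - s - m : ℕ) : ℝ) = k - s - m := by
        have := congrArg (Nat.cast : ℕ → ℝ) h1; push_cast at this; linarith
      have e2 : ((2*k - s : ℕ) : ℝ) = 2*k - s := by
        have := congrArg (Nat.cast : ℕ → ℝ) h2; push_cast at this; linarith
      rw [e1, e2]; ring
    rw [Finset.sum_congr rfl this, Finset.sum_const, Finset.card_range,
      nsmul_eq_mul, ← Nat.cast_mul]
  rw [Finset.sum_congr rfl hinner, ← Nat.cast_sum, eq_div_iff (by norm_num : (6:ℝ) ≠ 0)]
  norm_cast
  rw [mul_comm]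
  exact nat_main k

theorem spf_partition_cost (n : ℕ) (hn : 2 ≤ n) :
    (∑ x ∈ (Finset.range n ×ˢ Finset.range n ×ˢ Finset.range n).filter
        (fun x : ℕ × ℕ × ℕ => x.1 + x.2.1 + x.2.2 = n - 2),
        ((x.1 : ℝ) + 2 * (x.2.1 : ℝ) + 2 * (x.2.2 : ℝ))) =
      (n.choose 2 : ℝ) * (5 / 3) * ((n : ℝ) - 2) ∧
    1 + (1 / (n.choose 2 : ℝ)) *
        (∑ x ∈ (Finset.range n ×ˢ Finset.range n ×ˢ Finset.range n).filter
          (fun x : ℕ × ℕ × ℕ => x.1 + x.2.1 + x.2.2 = n - 2),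
          ((x.1 : ℝ) + 2 * (x.2.1 : ℝ) + 2 * (x.2.2 : ℝ))) =
      5 / 3 * (n : ℝ) - 7 / 3 := by
  obtain ⟨k, rfl⟩ : ∃ k, n = k + 2 := ⟨n - 2, by omega⟩
  have hsub : k + 2 - 2 = k := by omega
  rw [hsub]
  have hsum := filtered_sum k
  rw [hsum]
  have hch : ((k+2).choose 2 : ℝ) = (k+1)*(k+2)/2 := by
    rw [Nat.cast_choose_two]
    push_cast; ring
  have hne : ((k+2).choose 2 : ℝ) ≠ 0 := by rw [hch]; positivity
  constructor
  · rw [hch]; push_cast; ring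
  · rw [hch]
    have h1 : ((k:ℝ)+1)*((k:ℝ)+2)/2 ≠ 0 := by positivity
    field_simp
    push_cast
    ring
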